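/- arXiv:1605.04136 — 2 statements merged into one kernel-verified Lean document; each statement's English description precedes it below -/
import Mathlib

section
/- For any ordinal α there exists a labelled transition system in which the relations ∼_α and ∼_{α+1} are distinct. Concretely, in the transition system whose states are the ordinals less than or equal to α+1, with a single label and transitions β ⟶ γ iff γ < β, one has α ∼_α α+1 but not α ∼_{α+1} α+1. -/
universe u v

/-- `Progress Tr R S` means relation `R` progresses to relation `S`
in the labelled transition system with transition relation `Tr`. -/
def Progress {St : Type u} {Δ : Type v} (Tr : St → Δ → St → Prop)
    (R S : Set (St × St)) : Prop :=
  ∀ p q, (p, q) ∈ R →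
    (∀ a p', Tr p a p' → ∃ q', Tr q a q' ∧ (p', q') ∈ S) ∧
    (∀ a q', Tr q a q' → ∃ p', Tr p a p' ∧ (p', q') ∈ S)

/-- Milner's stratification of bisimilarity: `∼₀ = univ`,
`∼_{α+1} = ⋃ {X | X ⤳ ∼_α}`, `∼_λ = ⋂_{β<λ} ∼_β` for limits. -/
noncomputable def Strat {St : Type u} {Δ : Type v} (Tr : St → Δ → St → Prop)
    (α : Ordinal.{w}) : Set (St × St) :=
  Ordinal.limitRecOn α
    Set.univ
    (fun _ ih => ⋃₀ {X | Progress Tr X ih})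
    (fun o _ ih => ⋂ (β : Ordinal.{w}) (h : β < o), ih β h)

section
variable {St : Type u} {Δ : Type v} (Tr : St → Δ → St → Prop)

lemma strat_zero : Strat Tr (0 : Ordinal.{w}) = Set.univ := by
  rw [Strat, Ordinal.limitRecOn_zero]

lemma strat_succ (δ : Ordinal.{w}) :
    Strat Tr (δ + 1) = ⋃₀ {X | Progress Tr X (Strat Tr δ)} := by
  rw [Strat, Ordinal.add_one_eq_succ, Ordinal.limitRecOn_succ]
  rfl

lemma strat_limit (o : Ordinal.{w}) (ho : Order.IsSuccLimit o) :
    Strat Tr o = ⋂ (β : Ordinal.{w}) (_ : β < o), Strat Tr β := by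
  rw [Strat, Ordinal.limitRecOn_limit _ _ _ _ ho]
  rfl

end

section
variable (α : Ordinal.{u})

def TrS : Set.Iic (α + 1) → Unit → Set.Iic (α + 1) → Prop :=
  fun a _ b => b.1 < a.1

lemma strat_lower (δ : Ordinal.{u}) :
    ∀ p q : Set.Iic (α + 1), (p.1 = q.1 ∨ (δ ≤ p.1 ∧ δ ≤ q.1)) →
      (p, q) ∈ Strat (TrS α) δ := by
  induction δ using Ordinal.limitRecOn with
  | zero =>
    intro p q _
    rw [strat_zero]; trivial
  | add_one δ ih =>
    intro p q hpq
    rw [strat_succ]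
    refine ⟨{r | r.1.1 = r.2.1 ∨ (δ + 1 ≤ r.1.1 ∧ δ + 1 ≤ r.2.1)}, ?_, hpq⟩
    rintro p q (heq | ⟨hp, hq⟩) <;> simp only [Set.mem_setOf_eq] at *
    · constructor
      · intro _ p' hp'
        refine ⟨p', ?_, ih p' p' (Or.inl rfl)⟩
        show p'.1 < q.1
        rw [← heq]; exact hp'
      · intro _ q' hq'
        refine ⟨q', ?_, ih q' q' (Or.inl rfl)⟩
        show q'.1 < p.1
        rw [heq]; exact hq'
    · have hδp : δ < p.1 := lt_of_lt_of_le (Order.lt_add_one_iff.mpr le_rfl) hp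
      have hδq : δ < q.1 := lt_of_lt_of_le (Order.lt_add_one_iff.mpr le_rfl) hq
      constructor
      · intro _ p' hp'
        by_cases h : p'.1 < q.1
        · exact ⟨p', h, ih p' p' (Or.inl rfl)⟩
        · push_neg at h
          refine ⟨⟨δ, le_trans hδq.le q.2⟩, hδq, ih p' _ (Or.inr ⟨le_trans hδq.le h, le_rfl⟩)⟩
      · intro _ q' hq'
        by_cases h : q'.1 < p.1
        · exact ⟨q', h, ih q' q' (Or.inl rfl)⟩
        · push_neg at h
          refine ⟨⟨δ, le_trans hδp.le p.2⟩, hδp, ih _ q' (Or.inr ⟨le_rfl, le_trans hδp.le h⟩)⟩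
  | limit o ho ih =>
    intro p q hpq
    rw [strat_limit _ _ ho]
    refine Set.mem_iInter₂.mpr fun β hβ => ih β hβ p q ?_
    rcases hpq with h | ⟨hp, hq⟩
    · exact Or.inl h
    · exact Or.inr ⟨le_trans hβ.le hp, le_trans hβ.le hq⟩

lemma strat_upper (δ : Ordinal.{u}) :
    ∀ p q : Set.Iic (α + 1), (p, q) ∈ Strat (TrS α) δ →
      p.1 = q.1 ∨ (δ ≤ p.1 ∧ δ ≤ q.1) := by
  induction δ using Ordinal.limitRecOn with
  | zero =>
    intro p q _
    exact Or.inr ⟨zero_le, zero_le⟩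
  | add_one δ ih =>
    intro p q hpq
    rw [strat_succ] at hpq
    obtain ⟨X, hX, hpqX⟩ := hpq
    by_cases heq : p.1 = q.1
    · exact Or.inl heq
    rcases lt_or_gt_of_ne heq with hlt | hlt
    · -- p < q : use transition q → p
      obtain ⟨p', hp', hmem⟩ := (hX p q hpqX).2 () p hlt
      rcases ih p' p hmem with h | ⟨h1, _⟩
      · exact absurd h (ne_of_lt hp')
      · have : δ < p.1 := lt_of_le_of_lt h1 hp'
        exact Or.inr ⟨Order.add_one_le_iff.mpr this,
          Order.add_one_le_iff.mpr (this.trans hlt)⟩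
    · -- q < p : use transition p → q
      obtain ⟨q', hq', hmem⟩ := (hX p q hpqX).1 () q hlt
      rcases ih q q' hmem with h | ⟨h1, _⟩
      · exact absurd h.symm (ne_of_lt hq')
      · have : δ < q.1 := lt_of_le_of_lt (ih q q' hmem |>.resolve_left (fun h => (ne_of_lt hq') h.symm)).2 hq'
        exact Or.inr ⟨Order.add_one_le_iff.mpr (this.trans hlt), Order.add_one_le_iff.mpr this⟩
  | limit o ho ih =>
    intro p q hpq
    rw [strat_limit _ _ ho] at hpq
    have hall := Set.mem_iInter₂.mp hpq
    by_cases heq : p.1 = q.1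
    · exact Or.inl heq
    refine Or.inr ⟨?_, ?_⟩ <;> by_contra h <;> push_neg at h
    · have hs : p.1 + 1 < o := by
        rw [Ordinal.add_one_eq_succ]; exact ho.succ_lt h
      rcases ih _ hs p q (hall _ hs) with h' | ⟨h1, _⟩
      · exact heq h'
      · exact (Order.lt_add_one_iff.mpr le_rfl).not_ge h1
    · have hs : q.1 + 1 < o := by
        rw [Ordinal.add_one_eq_succ]; exact ho.succ_lt h
      rcases ih _ hs p q (hall _ hs) with h' | ⟨_, h2⟩
      · exact heq h'
      · exact (Order.lt_add_one_iff.mpr le_rfl).not_ge h2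

end

theorem strat_distinct (α : Ordinal.{u}) :
    ((⟨α, (le_self_add : α ≤ α + 1)⟩ : Set.Iic (α + 1)), (⟨α + 1, Set.self_mem_Iic⟩ : Set.Iic (α + 1))) ∈
      Strat (fun (a : Set.Iic (α + 1)) (_ : Unit) (b : Set.Iic (α + 1)) => b.1 < a.1) α ∧
    ((⟨α, (le_self_add : α ≤ α + 1)⟩ : Set.Iic (α + 1)), (⟨α + 1, Set.self_mem_Iic⟩ : Set.Iic (α + 1))) ∉
      Strat (fun (a : Set.Iic (α + 1)) (_ : Unit) (b : Set.Iic (α + 1)) => b.1 < a.1) (α + 1) ∧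
    Strat (fun (a : Set.Iic (α + 1)) (_ : Unit) (b : Set.Iic (α + 1)) => b.1 < a.1) α ≠
      Strat (fun (a : Set.Iic (α + 1)) (_ : Unit) (b : Set.Iic (α + 1)) => b.1 < a.1) (α + 1) := by
  have h1 := strat_lower α α ⟨α, (le_self_add : α ≤ α + 1)⟩ ⟨α + 1, Set.self_mem_Iic⟩
    (Or.inr ⟨le_rfl, (le_self_add : α ≤ α + 1)⟩)
  have h2 : (((⟨α, (le_self_add : α ≤ α + 1)⟩ : Set.Iic (α + 1)),
      (⟨α + 1, Set.self_mem_Iic⟩ : Set.Iic (α + 1)))) ∉ Strat (TrS α) (α + 1) := by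
    intro h
    rcases strat_upper α (α + 1) _ _ h with h' | ⟨hle, _⟩
    · exact (ne_of_lt (Order.lt_add_one_iff.mpr le_rfl)) h'
    · exact (Order.lt_add_one_iff.mpr (le_refl α)).not_ge hle
  exact ⟨h1, h2, fun he => h2 (he ▸ h1)⟩
end

section
/- Let (A, ≤) be a complete lattice and R a progression on A. Then the function f₀ : A → A defined by f₀(x) := ⨅{z_α | x ≤ z_α} is the unique largest s_R-compatible function: f₀ is monotone and s_R-compatible, and for every monotone s_R-compatible function f : A → A and every x ∈ A, f(x) ≤ f₀(x). -/
universe u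

/-- A progression on a complete lattice `A` is a binary relation `R` with
`≤ ∘ R ∘ ≤ ⊆ R` and, for every `b`, `⨆ {a | a R b}` itself related to `b`. -/
def IsProgression {A : Type u} [CompleteLattice A] (R : A → A → Prop) : Prop :=
  (∀ a' a b b' : A, a' ≤ a → R a b → b ≤ b' → R a' b') ∧
  (∀ b : A, R (sSup {a | R a b}) b)

/-- The transfinite stratification associated with a relation `R`:
`z_0 = ⊤`, `z_{α+1} = ⨆ {a | a R z_α}`, `z_λ = ⨅_{β<λ} z_β` for limits. -/
noncomputable def zStrat {A : Type u} [CompleteLattice A] (R : A → A → Prop)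
    (α : Ordinal.{u}) : A :=
  Ordinal.limitRecOn α
    ⊤
    (fun _ ih => sSup {a | R a ih})
    (fun o _ ih => ⨅ (β : Ordinal.{u}) (h : β < o), ih β h)

/-- The candidate largest function: `x ↦ ⨅ {z_α | x ≤ z_α}`. -/
noncomputable def lrfLat {A : Type u} [CompleteLattice A] (R : A → A → Prop) (x : A) : A :=
  ⨅ (α : Ordinal.{u}) (_ : x ≤ zStrat R α), zStrat R α

section helpers

variable {A : Type u} [CompleteLattice A] {R : A → A → Prop}

theorem zStrat_zero : zStrat R 0 = ⊤ := Ordinal.limitRecOn_zero ..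

theorem zStrat_succ (α : Ordinal.{u}) :
    zStrat R (Order.succ α) = sSup {a | R a (zStrat R α)} := Ordinal.limitRecOn_succ ..

theorem zStrat_limit {α : Ordinal.{u}} (h : Order.IsSuccLimit α) :
    zStrat R α = ⨅ (β : Ordinal.{u}) (_ : β < α), zStrat R β := Ordinal.limitRecOn_limit _ _ _ _ h

theorem sR_mono (hR : IsProgression R) {x y : A} (h : x ≤ y) :
    sSup {a | R a x} ≤ sSup {a | R a y} :=
  sSup_le fun a ha => le_sSup (hR.1 a a x y le_rfl ha h)

theorem zStrat_succ_le (hR : IsProgression R) (α : Ordinal.{u}) :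
    zStrat R (Order.succ α) ≤ zStrat R α := by
  induction α using Ordinal.induction with
  | _ α IH =>
    rcases Ordinal.zero_or_succ_or_isSuccLimit α with rfl | ⟨γ, rfl⟩ | hlim
    · exact le_top.trans_eq zStrat_zero.symm
    · calc zStrat R (Order.succ (Order.succ γ))
            = sSup {a | R a (zStrat R (Order.succ γ))} := zStrat_succ _
        _ ≤ sSup {a | R a (zStrat R γ)} := sR_mono hR (IH γ (Order.lt_succ γ))
        _ = zStrat R (Order.succ γ) := (zStrat_succ γ).symm
    · rw [zStrat_limit hlim]
      refine le_iInf₂ fun β hβ => ?_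
      calc zStrat R (Order.succ α) = sSup {a | R a (zStrat R α)} := zStrat_succ α
        _ ≤ sSup {a | R a (zStrat R β)} := by
            refine sR_mono hR ?_
            rw [zStrat_limit hlim]; exact iInf₂_le β hβ
        _ = zStrat R (Order.succ β) := (zStrat_succ β).symm
        _ ≤ zStrat R β := IH β hβ

theorem zStrat_antitone (hR : IsProgression R) : Antitone (zStrat R) := by
  intro β α hβα
  induction α using Ordinal.induction with
  | _ α IH =>
    rcases eq_or_lt_of_le hβα with rfl | hlt
    · exact le_rfl
    rcases Ordinal.zero_or_succ_or_isSuccLimit α with rfl | ⟨γ, rfl⟩ | hlim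
    · exact absurd hlt not_lt_zero
    · exact (zStrat_succ_le hR γ).trans (IH γ (Order.lt_succ γ) (Order.lt_succ_iff.mp hlt))
    · rw [zStrat_limit hlim]; exact iInf₂_le β hlt

theorem zStrat_const_after (hR : IsProgression R) {α : Ordinal.{u}}
    (hfix : zStrat R (Order.succ α) = zStrat R α) :
    ∀ γ, α ≤ γ → zStrat R γ = zStrat R α := by
  intro γ hγ
  induction γ using Ordinal.induction with
  | _ γ IH =>
    rcases eq_or_lt_of_le hγ with rfl | hlt
    · rfl
    rcases Ordinal.zero_or_succ_or_isSuccLimit γ with rfl | ⟨η, rfl⟩ | hlim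
    · exact absurd hlt not_lt_zero
    · have hη : α ≤ η := Order.lt_succ_iff.mp hlt
      rw [zStrat_succ η, IH η (Order.lt_succ η) hη, ← zStrat_succ α, hfix]
    · rw [zStrat_limit hlim]
      refine le_antisymm (iInf₂_le α hlt) (le_iInf₂ fun β hβ => ?_)
      rcases le_total α β with h | h
      · exact (IH β hβ h).ge
      · exact (zStrat_antitone hR h).trans_eq' rfl

theorem zStrat_exists_fix (hR : IsProgression R) :
    ∃ α : Ordinal.{u}, zStrat R (Order.succ α) = zStrat R α := by
  have h := not_injective_of_ordinal (zStrat R)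
  rw [Function.not_injective_iff] at h
  obtain ⟨α, β, heq, hne⟩ := h
  rcases hne.lt_or_gt with hlt | hlt
  · have h1 : zStrat R β ≤ zStrat R (Order.succ α) :=
      zStrat_antitone hR (Order.succ_le_of_lt hlt)
    exact ⟨α, le_antisymm (zStrat_succ_le hR α) (heq.le.trans h1)⟩
  · have h1 : zStrat R α ≤ zStrat R (Order.succ β) :=
      zStrat_antitone hR (Order.succ_le_of_lt hlt)
    exact ⟨β, le_antisymm (zStrat_succ_le hR β) (heq.ge.trans h1)⟩

theorem zStrat_attained (hR : IsProgression R) (x : A) :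
    ∃ γ : Ordinal.{u}, x ≤ zStrat R γ ∧ ∀ β, x ≤ zStrat R β → zStrat R γ ≤ zStrat R β := by
  by_cases hall : ∀ β : Ordinal.{u}, x ≤ zStrat R β
  · obtain ⟨α, hfix⟩ := zStrat_exists_fix hR
    refine ⟨α, hall α, fun β _ => ?_⟩
    rcases le_total β α with h | h
    · exact zStrat_antitone hR h
    · exact (zStrat_const_after hR hfix β h).ge
  · push_neg at hall
    have hne : {β : Ordinal.{u} | ¬ x ≤ zStrat R β}.Nonempty := hall
    set δ := sInf {β : Ordinal.{u} | ¬ x ≤ zStrat R β} with hδ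
    have hmem : ¬ x ≤ zStrat R δ := csInf_mem hne
    have hmin : ∀ β, β < δ → x ≤ zStrat R β := fun β hβ => by
      by_contra hc
      have hm : β ∈ {β : Ordinal.{u} | ¬ x ≤ zStrat R β} := hc
      exact absurd (csInf_le' hm) hβ.not_ge
    rcases Ordinal.zero_or_succ_or_isSuccLimit δ with h0 | ⟨γ, hsucc⟩ | hlim
    · exact absurd (le_top.trans_eq (by rw [h0, zStrat_zero])) hmem
    · refine ⟨γ, hmin γ (hsucc ▸ Order.lt_succ γ), fun β hβ => ?_⟩
      have hβδ : β < δ := by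
        by_contra hc
        exact hmem (hβ.trans (zStrat_antitone hR (not_lt.mp hc)))
      have hβγ : β < Order.succ γ := hsucc ▸ hβδ
      exact zStrat_antitone hR (Order.lt_succ_iff.mp hβγ)
    · exfalso
      refine hmem ?_
      rw [zStrat_limit hlim]
      exact le_iInf₂ fun β hβ => hmin β hβ

end helpers

theorem lrfLat_largest_compatible {A : Type u} [CompleteLattice A] (R : A → A → Prop)
    (hR : IsProgression R) :
    Monotone (lrfLat R) ∧
    (∀ x : A, lrfLat R (sSup {a | R a x}) ≤ sSup {a | R a (lrfLat R x)}) ∧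
    ∀ f : A → A, Monotone f →
      (∀ x : A, f (sSup {a | R a x}) ≤ sSup {a | R a (f x)}) →
      ∀ x : A, f x ≤ lrfLat R x := by
  refine ⟨?_, ?_, ?_⟩
  · intro x y hxy
    exact le_iInf₂ fun α hα => iInf₂_le α (hxy.trans hα)
  · intro x
    obtain ⟨γ, hxγ, hminγ⟩ := zStrat_attained hR x
    have hval : lrfLat R x = zStrat R γ :=
      le_antisymm (iInf₂_le γ hxγ) (le_iInf₂ fun β hβ => hminγ β hβ)
    have hsx : sSup {a | R a x} ≤ zStrat R (Order.succ γ) := by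
      rw [zStrat_succ γ]
      exact sSup_le fun a ha => le_sSup (hR.1 a a x (zStrat R γ) le_rfl ha hxγ)
    calc lrfLat R (sSup {a | R a x}) ≤ zStrat R (Order.succ γ) := iInf₂_le (Order.succ γ) hsx
      _ = sSup {a | R a (zStrat R γ)} := zStrat_succ γ
      _ = sSup {a | R a (lrfLat R x)} := by rw [hval]
  · intro f hf hcomp x
    have key : ∀ α : Ordinal.{u}, f (zStrat R α) ≤ zStrat R α := by
      intro α
      induction α using Ordinal.induction with
      | _ α IH =>
        rcases Ordinal.zero_or_succ_or_isSuccLimit α with rfl | ⟨γ, rfl⟩ | hlim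
        · exact le_top.trans_eq zStrat_zero.symm
        · rw [zStrat_succ γ]
          exact (hcomp (zStrat R γ)).trans (sR_mono hR (IH γ (Order.lt_succ γ)))
        · rw [zStrat_limit hlim]
          refine le_iInf₂ fun β hβ => ?_
          exact (hf (iInf₂_le β hβ)).trans (IH β hβ)
    exact le_iInf₂ fun α hα => (hf hα).trans (key α)
end
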